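/- With the hypotheses of the tensor product construction, if B_A is an associative scalar product on A and B_g an invariant scalar product on g, then B(x⊗a, y⊗b) = ε(a,y) B_g(x,y) B_A(a,b) is an invariant scalar product on the color Hom-Lie algebra g⊗A, making it quadratic. -/

import Mathlib

variable {K : Type*} [Field K] {Γ : Type*} [AddCommGroup Γ]
variable {V : Type*} [AddCommGroup V] [Module K V]

/-- `ε` is a bicharacter on the abelian group `Γ` with values in `K`. -/
def IsBicharacter (ε : Γ → Γ → K) : Prop :=
  (∀ a b, ε a b * ε b a = 1) ∧
  (∀ a b c, ε a (b + c) = ε a b * ε a c) ∧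
  (∀ a b c, ε (a + b) c = ε a c * ε b c)

/-- `(V, G, br, α)` is a color Hom-Lie algebra with bicharacter `ε`:
the bracket respects the grading `G`, `α` is even, the bracket is
`ε`-skew-symmetric on homogeneous elements, and the `ε`-Hom-Jacobi
identity holds on homogeneous elements. -/
def IsColorHomLie (ε : Γ → Γ → K) (G : Γ → Submodule K V)
    (br : V →ₗ[K] V →ₗ[K] V) (α : V →ₗ[K] V) : Prop :=
  (∀ a b, ∀ x ∈ G a, ∀ y ∈ G b, br x y ∈ G (a + b)) ∧
  (∀ a, ∀ x ∈ G a, α x ∈ G a) ∧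
  (∀ a b, ∀ x ∈ G a, ∀ y ∈ G b, br x y = -(ε a b) • br y x) ∧
  (∀ a b c, ∀ x ∈ G a, ∀ y ∈ G b, ∀ z ∈ G c,
    ε c a • br (α x) (br y z) + ε a b • br (α y) (br z x)
      + ε b c • br (α z) (br x y) = 0)

/-- Multiplicativity: `α` is a morphism for the bracket. -/
def IsMult (br : V →ₗ[K] V →ₗ[K] V) (α : V →ₗ[K] V) : Prop :=
  ∀ x y, α (br x y) = br (α x) (α y)

/-- Quadratic color Hom-Lie algebra: a color Hom-Lie algebra with a
nondegenerate, `ε`-symmetric, invariant bilinear form `B` for which `α`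
is `B`-symmetric. -/
def IsQuadColorHomLie (ε : Γ → Γ → K) (G : Γ → Submodule K V)
    (br : V →ₗ[K] V →ₗ[K] V) (α : V →ₗ[K] V)
    (B : V →ₗ[K] V →ₗ[K] K) : Prop :=
  IsColorHomLie ε G br α ∧
  (∀ x, (∀ y, B x y = 0) → x = 0) ∧
  (∀ a b, ∀ x ∈ G a, ∀ y ∈ G b, B x y = ε a b * B y x) ∧
  (∀ x y z, B (br x y) z = B x (br y z)) ∧
  (∀ x y, B (α x) y = B x (α y))

open scoped TensorProduct

variable {A : Type*} [AddCommGroup A] [Module K A]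

section AuxSpan

variable {N : Type*} [AddCommGroup N] [Module K N]
variable {M : Type*} [AddCommGroup M] [Module K M]

lemma aux_bilin_mem (F : M →ₗ[K] M →ₗ[K] N) (Q : Submodule K N) {s t : Set M}
    (h : ∀ x ∈ s, ∀ y ∈ t, F x y ∈ Q) :
    ∀ x ∈ Submodule.span K s, ∀ y ∈ Submodule.span K t, F x y ∈ Q := by
  intro x hx
  induction hx using Submodule.span_induction with
  | mem x hxs =>
    intro y hy
    induction hy using Submodule.span_induction with
    | mem y hyt => exact h x hxs y hyt
    | zero => simp [Q.zero_mem]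
    | add _ _ _ _ h1 h2 => rw [map_add]; exact Q.add_mem h1 h2
    | smul k _ _ h1 => rw [map_smul]; exact Q.smul_mem k h1
  | zero => intro y hy; simp [Q.zero_mem]
  | add _ _ _ _ h1 h2 =>
    intro y hy
    rw [map_add, LinearMap.add_apply]; exact Q.add_mem (h1 y hy) (h2 y hy)
  | smul k _ _ h1 =>
    intro y hy
    rw [map_smul, LinearMap.smul_apply]; exact Q.smul_mem k (h1 y hy)

lemma aux_bilin_eq (F : M →ₗ[K] M →ₗ[K] N) {s t : Set M}
    (h : ∀ x ∈ s, ∀ y ∈ t, F x y = 0) :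
    ∀ x ∈ Submodule.span K s, ∀ y ∈ Submodule.span K t, F x y = 0 := by
  intro x hx
  induction hx using Submodule.span_induction with
  | mem x hxs =>
    intro y hy
    induction hy using Submodule.span_induction with
    | mem y hyt => exact h x hxs y hyt
    | zero => simp
    | add _ _ _ _ h1 h2 => rw [map_add, h1, h2, add_zero]
    | smul k _ _ h1 => rw [map_smul, h1, smul_zero]
  | zero => intro y hy; simp
  | add _ _ _ _ h1 h2 =>
    intro y hy
    rw [map_add, LinearMap.add_apply, h1 y hy, h2 y hy, add_zero]
  | smul k _ _ h1 =>
    intro y hy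
    rw [map_smul, LinearMap.smul_apply, h1 y hy, smul_zero]

lemma aux_trilin_eq (F : M →ₗ[K] M →ₗ[K] M →ₗ[K] N) {s t r : Set M}
    (h : ∀ x ∈ s, ∀ y ∈ t, ∀ z ∈ r, F x y z = 0) :
    ∀ x ∈ Submodule.span K s, ∀ y ∈ Submodule.span K t, ∀ z ∈ Submodule.span K r,
      F x y z = 0 := by
  intro x hx
  induction hx using Submodule.span_induction with
  | mem x hxs =>
    intro y hy
    induction hy using Submodule.span_induction with
    | mem y hyt =>
      intro z hz
      induction hz using Submodule.span_induction with
      | mem z hzr => exact h x hxs y hyt z hzr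
      | zero => simp
      | add _ _ _ _ h1 h2 => rw [map_add, h1, h2, add_zero]
      | smul k _ _ h1 => rw [map_smul, h1, smul_zero]
    | zero => intro z hz; simp
    | add _ _ _ _ h1 h2 =>
      intro z hz
      rw [map_add, LinearMap.add_apply, h1 z hz, h2 z hz, add_zero]
    | smul k _ _ h1 =>
      intro z hz
      rw [map_smul, LinearMap.smul_apply, h1 z hz, smul_zero]
  | zero => intro y hy z hz; simp
  | add _ _ _ _ h1 h2 =>
    intro y hy z hz
    rw [map_add, LinearMap.add_apply, LinearMap.add_apply, h1 y hy z hz, h2 y hy z hz,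
      add_zero]
  | smul k _ _ h1 =>
    intro y hy z hz
    rw [map_smul, LinearMap.smul_apply, LinearMap.smul_apply, h1 y hy z hz, smul_zero]

end AuxSpan

/-- If `B_A` is an associative scalar product on a commutative color
Hom-associative algebra `A` and `B_g` an invariant scalar product on a color
Hom-Lie algebra `g`, then `B(x⊗a, y⊗b) = ε(a,y) B_g(x,y) B_A(a,b)` is an
invariant scalar product on the tensor product color Hom-Lie algebra `g ⊗ A`,
which is therefore quadratic. -/
theorem stmt12 [DecidableEq Γ] (ε : Γ → Γ → K) (hε : IsBicharacter ε)
    (Gg : Γ → Submodule K V) (br : V →ₗ[K] V →ₗ[K] V) (αg : V →ₗ[K] V)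
    (Bg : V →ₗ[K] V →ₗ[K] K)
    (hg : IsQuadColorHomLie ε Gg br αg Bg)
    (hGgint : DirectSum.IsInternal Gg)
    (GA : Γ → Submodule K A) (μ : A →ₗ[K] A →ₗ[K] A) (αA : A →ₗ[K] A)
    (BA : A →ₗ[K] A →ₗ[K] K)
    (hGAint : DirectSum.IsInternal GA)
    (hμgr : ∀ a b, ∀ u ∈ GA a, ∀ v ∈ GA b, μ u v ∈ GA (a + b))
    (hαA : ∀ a, ∀ u ∈ GA a, αA u ∈ GA a)
    (hassoc : ∀ u v w, μ (αA u) (μ v w) = μ (μ u v) (αA w))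
    (hcomm : ∀ a b, ∀ u ∈ GA a, ∀ v ∈ GA b, μ u v = ε a b • μ v u)
    (hBAnd : ∀ u, (∀ v, BA u v = 0) → u = 0)
    (hBAsym : ∀ a b, ∀ u ∈ GA a, ∀ v ∈ GA b, BA u v = ε a b * BA v u)
    (hBAinv : ∀ u v w, BA (μ u v) w = BA u (μ v w))
    (hBAα : ∀ u v, BA (αA u) v = BA u (αA v))
    (brT : (V ⊗[K] A) →ₗ[K] (V ⊗[K] A) →ₗ[K] (V ⊗[K] A))
    (hbrT : ∀ a b c d : Γ, ∀ x ∈ Gg a, ∀ u ∈ GA b, ∀ y ∈ Gg c, ∀ v ∈ GA d,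
      brT (x ⊗ₜ[K] u) (y ⊗ₜ[K] v) = ε b c • (br x y ⊗ₜ[K] μ u v))
    (BT : (V ⊗[K] A) →ₗ[K] (V ⊗[K] A) →ₗ[K] K)
    (hBT : ∀ a b c d : Γ, ∀ x ∈ Gg a, ∀ u ∈ GA b, ∀ y ∈ Gg c, ∀ v ∈ GA d,
      BT (x ⊗ₜ[K] u) (y ⊗ₜ[K] v) = ε b c * (Bg x y * BA u v)) :
    IsQuadColorHomLie ε
      (fun δ => Submodule.span K
        {t : V ⊗[K] A | ∃ a b, a + b = δ ∧ ∃ x ∈ Gg a, ∃ u ∈ GA b, t = x ⊗ₜ[K] u})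
      brT (TensorProduct.map αg αA) BT := by
  classical
  obtain ⟨hε1, hεl, hεr⟩ := hε
  obtain ⟨⟨hbrgr, hαgr, hskew, hjac⟩, hBgnd, hBgsym, hBginv, hBgα⟩ := hg
  have hεne : ∀ a b, ε a b ≠ 0 := by
    intro a b h
    have h2 := hε1 a b
    rw [h, zero_mul] at h2
    exact zero_ne_one h2
  set αT : (V ⊗[K] A) →ₗ[K] (V ⊗[K] A) := TensorProduct.map αg αA with hαT
  -- spanning set of homogeneous pure tensors
  set Shom : Set (V ⊗[K] A) :=
    {t | ∃ a b, ∃ x : V, ∃ u : A, x ∈ Gg a ∧ u ∈ GA b ∧ t = x ⊗ₜ[K] u} with hShomdef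
  have hShom : Submodule.span K Shom = ⊤ := by
    rw [eq_top_iff, ← TensorProduct.span_tmul_eq_top K V A, Submodule.span_le]
    rintro _ ⟨x, u, rfl⟩
    have hx : x ∈ (⊤ : Submodule K V) := trivial
    rw [← hGgint.submodule_iSup_eq_top] at hx
    refine Submodule.iSup_induction Gg
      (motive := fun x => x ⊗ₜ[K] u ∈ Submodule.span K Shom) hx ?_ ?_ ?_
    · intro a x hxa
      have hu : u ∈ (⊤ : Submodule K A) := trivial
      rw [← hGAint.submodule_iSup_eq_top] at hu
      refine Submodule.iSup_induction GA
        (motive := fun u => x ⊗ₜ[K] u ∈ Submodule.span K Shom) hu ?_ ?_ ?_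
      · intro b u hub
        exact Submodule.subset_span ⟨a, b, x, u, hxa, hub, rfl⟩
      · rw [TensorProduct.tmul_zero]; exact Submodule.zero_mem _
      · intro u v h1 h2
        rw [TensorProduct.tmul_add]; exact Submodule.add_mem _ h1 h2
    · rw [TensorProduct.zero_tmul]; exact Submodule.zero_mem _
    · intro x y h1 h2
      rw [TensorProduct.add_tmul]; exact Submodule.add_mem _ h1 h2
  refine ⟨⟨?_, ?_, ?_, ?_⟩, ?_, ?_, ?_, ?_⟩
  · -- bracket grading
    intro a b x hx y hy
    refine aux_bilin_mem brT (Submodule.span K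
      {t : V ⊗[K] A | ∃ a' b', a' + b' = a + b ∧
        ∃ x ∈ Gg a', ∃ u ∈ GA b', t = x ⊗ₜ[K] u}) ?_ x hx y hy
    rintro _ ⟨a₁, a₂, ha, x', hx', u, hu, rfl⟩ _ ⟨b₁, b₂, hb, y', hy', v, hv, rfl⟩
    rw [hbrT a₁ a₂ b₁ b₂ x' hx' u hu y' hy' v hv]
    refine Submodule.smul_mem _ _ (Submodule.subset_span ?_)
    exact ⟨a₁ + b₁, a₂ + b₂, by rw [← ha, ← hb]; abel,
      br x' y', hbrgr _ _ x' hx' y' hy', μ u v, hμgr _ _ u hu v hv, rfl⟩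
  · -- α grading
    intro δ x hx
    induction hx using Submodule.span_induction with
    | mem t ht =>
      obtain ⟨a, b, hab, x', hx', u, hu, rfl⟩ := ht
      rw [hαT, TensorProduct.map_tmul]
      exact Submodule.subset_span
        ⟨a, b, hab, αg x', hαgr a x' hx', αA u, hαA b u hu, rfl⟩
    | zero => rw [map_zero]; exact Submodule.zero_mem _
    | add _ _ _ _ h1 h2 => rw [map_add]; exact Submodule.add_mem _ h1 h2
    | smul k _ _ h1 => rw [map_smul]; exact Submodule.smul_mem _ k h1
  · -- skew symmetry
    intro a b x hx y hy
    have key := aux_bilin_eq (brT + ε a b • brT.flip) ?_ x hx y hy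
    · simp only [LinearMap.add_apply, LinearMap.smul_apply, LinearMap.flip_apply] at key
      rw [neg_smul]
      exact eq_neg_of_add_eq_zero_left key
    rintro _ ⟨a₁, a₂, ha, x', hx', u, hu, rfl⟩ _ ⟨b₁, b₂, hb, y', hy', v, hv, rfl⟩
    subst ha hb
    simp only [LinearMap.add_apply, LinearMap.smul_apply, LinearMap.flip_apply]
    rw [hbrT a₁ a₂ b₁ b₂ x' hx' u hu y' hy' v hv,
      hbrT b₁ b₂ a₁ a₂ y' hy' v hv x' hx' u hu,
      hskew a₁ b₁ x' hx' y' hy', hcomm a₂ b₂ u hu v hv]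
    simp only [TensorProduct.tmul_smul, ← TensorProduct.smul_tmul', smul_smul]
    match_scalars
    simp only [hεl, hεr]
    linear_combination (ε a₁ b₁ * ε a₂ b₁ * ε a₂ b₂) * hε1 a₁ b₂
  · -- Jacobi
    intro a b c x hx y hy z hz
    set T1 : (V ⊗[K] A) →ₗ[K] (V ⊗[K] A) →ₗ[K] (V ⊗[K] A) →ₗ[K] (V ⊗[K] A) :=
      (LinearMap.lcomp K ((V ⊗[K] A) →ₗ[K] (V ⊗[K] A)) brT).comp
        ((LinearMap.llcomp K (V ⊗[K] A) (V ⊗[K] A) (V ⊗[K] A)).comp (brT.comp αT))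
      with hT1
    set T2 := (LinearMap.lflip.comp T1).flip with hT2
    set T3 := (LinearMap.lflip.comp T2).flip with hT3
    have happ1 : ∀ x y z : V ⊗[K] A, T1 x y z = brT (αT x) (brT y z) := by
      intro x y z
      rw [hT1]
      simp only [LinearMap.comp_apply, LinearMap.lcomp_apply, LinearMap.llcomp_apply]
    have happ2 : ∀ x y z : V ⊗[K] A, T2 x y z = brT (αT y) (brT z x) := by
      intro x y z
      rw [hT2]
      simp only [LinearMap.flip_apply, LinearMap.comp_apply, LinearEquiv.coe_coe, LinearMap.lflip_apply, happ1]
    have happ3 : ∀ x y z : V ⊗[K] A, T3 x y z = brT (αT z) (brT x y) := by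
      intro x y z
      rw [hT3]
      simp only [LinearMap.flip_apply, LinearMap.comp_apply, LinearEquiv.coe_coe, LinearMap.lflip_apply, happ2]
    have key := aux_trilin_eq (ε c a • T1 + ε a b • T2 + ε b c • T3) ?_ x hx y hy z hz
    · simpa only [LinearMap.add_apply, LinearMap.smul_apply, happ1, happ2, happ3] using key
    rintro _ ⟨a₁, a₂, ha, x', hx', u, hu, rfl⟩ _ ⟨b₁, b₂, hb, y', hy', v, hv, rfl⟩
      _ ⟨c₁, c₂, hc, z', hz', w, hw, rfl⟩
    subst ha hb hc
    simp only [LinearMap.add_apply, LinearMap.smul_apply, happ1, happ2, happ3, hαT,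
      TensorProduct.map_tmul]
    rw [hbrT b₁ b₂ c₁ c₂ y' hy' v hv z' hz' w hw,
      hbrT c₁ c₂ a₁ a₂ z' hz' w hw x' hx' u hu,
      hbrT a₁ a₂ b₁ b₂ x' hx' u hu y' hy' v hv]
    simp only [map_smul]
    rw [hbrT a₁ a₂ (b₁ + c₁) (b₂ + c₂) (αg x') (hαgr a₁ x' hx') (αA u) (hαA a₂ u hu)
        (br y' z') (hbrgr b₁ c₁ y' hy' z' hz') (μ v w) (hμgr b₂ c₂ v hv w hw),
      hbrT b₁ b₂ (c₁ + a₁) (c₂ + a₂) (αg y') (hαgr b₁ y' hy') (αA v) (hαA b₂ v hv)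
        (br z' x') (hbrgr c₁ a₁ z' hz' x' hx') (μ w u) (hμgr c₂ a₂ w hw u hu),
      hbrT c₁ c₂ (a₁ + b₁) (a₂ + b₂) (αg z') (hαgr c₁ z' hz') (αA w) (hαA c₂ w hw)
        (br x' y') (hbrgr a₁ b₁ x' hx' y' hy') (μ u v) (hμgr a₂ b₂ u hu v hv)]
    have hM2 : μ (αA v) (μ w u) = ε (b₂ + c₂) a₂ • μ (αA u) (μ v w) := by
      rw [hassoc v w u,
        hcomm (b₂ + c₂) a₂ (μ v w) (hμgr b₂ c₂ v hv w hw) (αA u) (hαA a₂ u hu)]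
    have hM3 : μ (αA w) (μ u v) = (ε (c₂ + a₂) b₂ * ε (b₂ + c₂) a₂) • μ (αA u) (μ v w) := by
      rw [hassoc w u v,
        hcomm (c₂ + a₂) b₂ (μ w u) (hμgr c₂ a₂ w hw u hu) (αA v) (hαA b₂ v hv), hM2,
        smul_smul]
    rw [hM2, hM3]
    have hJ := hjac a₁ b₁ c₁ x' hx' y' hy' z' hz'
    have h0 : (ε c₂ a₁ * ε c₂ a₂ * ε b₂ c₁ * ε a₂ b₁) •
        ((ε c₁ a₁ • br (αg x') (br y' z') + ε a₁ b₁ • br (αg y') (br z' x')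
          + ε b₁ c₁ • br (αg z') (br x' y')) ⊗ₜ[K] μ (αA u) (μ v w)) = 0 := by
      rw [hJ, TensorProduct.zero_tmul, smul_zero]
    rw [← h0]
    simp only [TensorProduct.add_tmul, TensorProduct.tmul_smul, ← TensorProduct.smul_tmul',
      smul_add, smul_smul]
    match_scalars
    · simp only [hεl, hεr]
      linear_combination (ε c₁ a₁ * ε c₂ a₁ * ε c₂ a₂ * ε b₂ c₁ * ε a₂ b₁) * hε1 c₁ a₂
    · simp only [hεl, hεr]
      linear_combination
        (ε a₁ b₁ * ε a₂ b₁ * ε c₂ a₁ * ε b₂ c₁ * ε c₂ a₂ * (ε a₁ b₂ * ε b₂ a₁)) * hε1 a₂ b₂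
          + (ε a₁ b₁ * ε a₂ b₁ * ε c₂ a₁ * ε b₂ c₁ * ε c₂ a₂) * hε1 a₁ b₂
    · simp only [hεl, hεr]
      linear_combination
        (ε c₂ a₁ * ε c₂ a₂ * ε b₂ c₁ * ε a₂ b₁ * ε b₁ c₁ * (ε b₁ c₂ * ε c₂ b₁)
            * (ε b₂ c₂ * ε c₂ b₂)) * hε1 a₂ b₂
          + (ε c₂ a₁ * ε c₂ a₂ * ε b₂ c₁ * ε a₂ b₁ * ε b₁ c₁ * (ε b₁ c₂ * ε c₂ b₁)) * hε1 b₂ c₂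
          + (ε c₂ a₁ * ε c₂ a₂ * ε b₂ c₁ * ε a₂ b₁ * ε b₁ c₁) * hε1 b₁ c₂
  · -- nondegeneracy
    intro t ht
    set bA : Module.Basis ((i : Γ) × (Module.Basis.ofVectorSpaceIndex K ↥(GA i))) K A :=
      hGAint.collectedBasis (fun i => Module.Basis.ofVectorSpace K ↥(GA i)) with hbA
    have hbAmem : ∀ j, bA j ∈ GA j.1 := fun j =>
      hGAint.collectedBasis_mem (fun i => Module.Basis.ofVectorSpace K ↥(GA i)) j
    set e : (V ⊗[K] A) ≃ₗ[K] (((i : Γ) × (Module.Basis.ofVectorSpaceIndex K ↥(GA i))) →₀ V) :=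
      (TensorProduct.congr (LinearEquiv.refl K V) bA.repr).trans
        (TensorProduct.finsuppScalarRight K K V _) with he
    have he_tmul : ∀ (x : V) j, e (x ⊗ₜ[K] bA j) = Finsupp.single j x := by
      intro x j
      rw [he]
      ext i
      rw [LinearEquiv.trans_apply, TensorProduct.congr_tmul, LinearEquiv.refl_apply,
        Module.Basis.repr_self, TensorProduct.finsuppScalarRight_apply_tmul_apply]
      simp [Finsupp.single_apply, ite_smul]
    set S3 : Set (V ⊗[K] A) :=
      {s | ∃ a, ∃ x : V, ∃ j, x ∈ Gg a ∧ s = x ⊗ₜ[K] bA j} with hS3def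
    have hS3 : Submodule.span K S3 = ⊤ := by
      rw [eq_top_iff, ← hShom, Submodule.span_le]
      rintro _ ⟨a, b, x, u, hx, hu, rfl⟩
      have hrepr : x ⊗ₜ[K] u = ((bA.repr u).sum fun j k => k • (x ⊗ₜ[K] bA j)) := by
        conv_lhs => rw [← bA.linearCombination_repr u]
        rw [Finsupp.linearCombination_apply, Finsupp.sum, Finsupp.sum,
          TensorProduct.tmul_sum]
        exact Finset.sum_congr rfl fun j _ => TensorProduct.tmul_smul _ _ _
      rw [hrepr]
      exact Submodule.sum_mem _ fun j hj =>
        Submodule.smul_mem _ _ (Submodule.subset_span ⟨a, x, j, hx, rfl⟩)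
    have hAspan : Submodule.span K {u : A | ∃ b, u ∈ GA b} = ⊤ := by
      rw [eq_top_iff, ← hGAint.submodule_iSup_eq_top]
      exact iSup_le fun b u hu => Submodule.subset_span ⟨b, hu⟩
    have key : ∀ (c : Γ), ∀ y ∈ Gg c, ∀ j, Bg ((e t) j) y = 0 := by
      intro c y hyc
      set Gm : ((((i : Γ) × (Module.Basis.ofVectorSpaceIndex K ↥(GA i))) →₀ V) →ₗ[K] A) :=
        Finsupp.lsum K (fun j => LinearMap.smulRight (ε j.1 c • Bg.flip y) (bA j)) with hGm
      have hfun : (LinearMap.lcomp K K (TensorProduct.mk K V A y)).comp BT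
          = BA ∘ₗ (Gm ∘ₗ (e : (V ⊗[K] A) →ₗ[K] _)) := by
        apply LinearMap.ext_on hS3
        rintro _ ⟨a, x, j, hx, rfl⟩
        apply LinearMap.ext_on hAspan
        rintro v ⟨d, hv⟩
        simp only [LinearMap.comp_apply, LinearMap.lcomp_apply, LinearEquiv.coe_coe,
          TensorProduct.mk_apply]
        rw [he_tmul, hBT a j.1 c d x hx (bA j) (hbAmem j) y hyc v hv, hGm]
        rw [Finsupp.lsum_single, LinearMap.smulRight_apply]
        simp only [LinearMap.smul_apply, LinearMap.flip_apply, smul_eq_mul, map_smul]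
        ring
      have hGm0 : Gm (e t) = 0 := by
        apply hBAnd
        intro v
        have h1 := LinearMap.congr_fun (LinearMap.congr_fun hfun t) v
        simp only [LinearMap.comp_apply, LinearMap.lcomp_apply, TensorProduct.mk_apply,
          LinearEquiv.coe_coe] at h1
        rw [← h1]
        exact ht _
      intro j
      by_cases hj : j ∈ (e t).support
      · have hexp : Gm (e t)
            = ∑ j' ∈ (e t).support, (ε j'.1 c * Bg ((e t) j') y) • bA j' := by
          rw [hGm, Finsupp.lsum_apply, Finsupp.sum]
          exact Finset.sum_congr rfl fun j' _ => by
            simp only [LinearMap.smulRight_apply, LinearMap.smul_apply,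
              LinearMap.flip_apply, smul_eq_mul]
        have hli := linearIndependent_iff'.mp bA.linearIndependent (e t).support
          (fun j' => ε j'.1 c * Bg ((e t) j') y) (by rw [← hexp, hGm0]) j hj
        rcases mul_eq_zero.mp hli with h | h
        · exact absurd h (hεne _ _)
        · exact h
      · rw [Finsupp.notMem_support_iff.mp hj]
        simp
    have hall : ∀ j, (e t) j = 0 := by
      intro j
      apply hBgnd
      intro y
      have hy : y ∈ (⊤ : Submodule K V) := trivial
      rw [← hGgint.submodule_iSup_eq_top] at hy
      exact Submodule.iSup_induction Gg (motive := fun y => Bg ((e t) j) y = 0) hy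
        (fun c y hyc => key c y hyc j) (by simp)
        (fun y₁ y₂ h1 h2 => by rw [map_add, h1, h2, add_zero])
    have het : e t = 0 := Finsupp.ext hall
    have h2 := congrArg e.symm het
    simpa using h2
  · -- ε-symmetry
    intro a b x hx y hy
    have key := aux_bilin_eq (BT - ε a b • BT.flip) ?_ x hx y hy
    · simp only [LinearMap.sub_apply, LinearMap.smul_apply, LinearMap.flip_apply,
        smul_eq_mul] at key
      exact sub_eq_zero.mp key
    rintro _ ⟨a₁, a₂, ha, x', hx', u, hu, rfl⟩ _ ⟨b₁, b₂, hb, y', hy', v, hv, rfl⟩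
    subst ha hb
    simp only [LinearMap.sub_apply, LinearMap.smul_apply, LinearMap.flip_apply,
      smul_eq_mul]
    rw [hBT a₁ a₂ b₁ b₂ x' hx' u hu y' hy' v hv,
      hBT b₁ b₂ a₁ a₂ y' hy' v hv x' hx' u hu,
      hBgsym a₁ b₁ x' hx' y' hy', hBAsym a₂ b₂ u hu v hv]
    simp only [hεl, hεr]
    linear_combination (-(ε a₁ b₁ * ε a₂ b₁ * ε a₂ b₂ * (Bg y' x' * BA v u))) * hε1 a₁ b₂
  · -- invariance
    intro x y z
    have hx : x ∈ Submodule.span K Shom := by rw [hShom]; exact Submodule.mem_top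
    have hy : y ∈ Submodule.span K Shom := by rw [hShom]; exact Submodule.mem_top
    have hz : z ∈ Submodule.span K Shom := by rw [hShom]; exact Submodule.mem_top
    have key := aux_trilin_eq
      (((LinearMap.llcomp K (V ⊗[K] A) (V ⊗[K] A) ((V ⊗[K] A) →ₗ[K] K) BT).comp brT)
        + (-1 : K) • (LinearMap.lcomp K ((V ⊗[K] A) →ₗ[K] K) brT).comp
            ((LinearMap.llcomp K (V ⊗[K] A) (V ⊗[K] A) K).comp BT)) ?_ x hx y hy z hz
    · simp only [LinearMap.add_apply, LinearMap.smul_apply, smul_eq_mul, LinearMap.comp_apply,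
        LinearMap.llcomp_apply, LinearMap.lcomp_apply] at key
      exact sub_eq_zero.mp (by linear_combination key)
    rintro _ ⟨a₁, a₂, x', u, hx', hu, rfl⟩ _ ⟨b₁, b₂, y', v, hy', hv, rfl⟩
      _ ⟨c₁, c₂, z', w, hz', hw, rfl⟩
    simp only [LinearMap.add_apply, LinearMap.smul_apply, LinearMap.comp_apply,
      LinearMap.llcomp_apply, LinearMap.lcomp_apply]
    rw [hbrT a₁ a₂ b₁ b₂ x' hx' u hu y' hy' v hv,
      hbrT b₁ b₂ c₁ c₂ y' hy' v hv z' hz' w hw]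
    simp only [map_smul, LinearMap.smul_apply, smul_eq_mul]
    rw [hBT (a₁ + b₁) (a₂ + b₂) c₁ c₂ (br x' y') (hbrgr a₁ b₁ x' hx' y' hy')
        (μ u v) (hμgr a₂ b₂ u hu v hv) z' hz' w hw,
      hBT a₁ a₂ (b₁ + c₁) (b₂ + c₂) x' hx' u hu (br y' z') (hbrgr b₁ c₁ y' hy' z' hz')
        (μ v w) (hμgr b₂ c₂ v hv w hw),
      hBginv x' y' z', hBAinv u v w]
    simp only [hεl, hεr]
    ring
  · -- α symmetric for BT
    intro x y
    have hx : x ∈ Submodule.span K Shom := by rw [hShom]; exact Submodule.mem_top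
    have hy : y ∈ Submodule.span K Shom := by rw [hShom]; exact Submodule.mem_top
    have key := aux_bilin_eq (BT.comp αT - (LinearMap.lcomp K K αT).comp BT) ?_ x hx y hy
    · simp only [LinearMap.sub_apply, LinearMap.comp_apply, LinearMap.lcomp_apply] at key
      exact sub_eq_zero.mp key
    rintro _ ⟨a₁, a₂, x', u, hx', hu, rfl⟩ _ ⟨b₁, b₂, y', v, hy', hv, rfl⟩
    simp only [LinearMap.sub_apply, LinearMap.comp_apply, LinearMap.lcomp_apply, hαT,
      TensorProduct.map_tmul]
    rw [hBT a₁ a₂ b₁ b₂ (αg x') (hαgr a₁ x' hx') (αA u) (hαA a₂ u hu) y' hy' v hv,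
      hBT a₁ a₂ b₁ b₂ x' hx' u hu (αg y') (hαgr b₁ y' hy') (αA v) (hαA b₂ v hv),
      hBgα x' y', hBAα u v]
    ring
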